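/- As r → ∞, the combination f₁(r) + f₂(r) = O(e^r), where f₁(r) = r[3 - 8cosh(2r) - cosh(4r)] and f₂(r) = sinh(2r)[8 log(2cosh r) - 1] + sinh(4r) log(2cosh r); in particular the leading terms of order r·e^{4r} and r·e^{2r} cancel. -/
import Mathlib


set_option maxHeartbeats 1000000 in
/-- f₁(r) + f₂(r) = O(e^r) as r → ∞ : the leading exponentially growing
    terms of f₁ and f₂ cancel. -/
theorem f1_plus_f2_bigO :
    ∃ C R : ℝ, 0 < C ∧ 0 < R ∧ ∀ r ≥ R,
      |(r * (3 - 8 * Real.cosh (2 * r) - Real.cosh (4 * r)))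
        + (Real.sinh (2 * r) * (8 * Real.log (2 * Real.cosh r) - 1)
            + Real.sinh (4 * r) * Real.log (2 * Real.cosh r))|
      ≤ C * Real.exp r := by
  refine ⟨22, 1, by norm_num, by norm_num, fun r hr => ?_⟩
  set a := Real.exp (2*r) with ha_def
  set b := Real.exp (-(2*r)) with hb_def
  set ε := Real.log (1 + b) with he_def
  have hbpos : 0 < b := Real.exp_pos _
  have hb1 : b ≤ 1 := by
    rw [hb_def]
    exact Real.exp_le_one_iff.mpr (by linarith)
  have hab : a * b = 1 := by
    rw [ha_def, hb_def, ← Real.exp_add]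
    simp
  have ha1 : 1 ≤ a := Real.one_le_exp (by linarith)
  have hc2 : Real.cosh (2*r) = (a+b)/2 := Real.cosh_eq _
  have hs2 : Real.sinh (2*r) = (a-b)/2 := Real.sinh_eq _
  have h4 : Real.exp (4*r) = a^2 := by
    rw [show (4:ℝ)*r = 2*r+2*r by ring, Real.exp_add, ha_def, sq]
  have h4' : Real.exp (-(4*r)) = b^2 := by
    rw [show -((4:ℝ)*r) = -(2*r)+ -(2*r) by ring, Real.exp_add, hb_def, sq]
  have hc4 : Real.cosh (4*r) = (a^2+b^2)/2 := by
    rw [Real.cosh_eq, h4, h4']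
  have hs4 : Real.sinh (4*r) = (a^2-b^2)/2 := by
    rw [Real.sinh_eq, h4, h4']
  have hL : Real.log (2 * Real.cosh r) = r + ε := by
    have hprod : 2 * Real.cosh r = Real.exp r * (1 + b) := by
      rw [Real.cosh_eq, hb_def, mul_add, mul_one, ← Real.exp_add]
      ring_nf
    rw [hprod, Real.log_mul (Real.exp_ne_zero r) (by positivity), Real.log_exp, he_def]
  have hε0 : 0 ≤ ε := Real.log_nonneg (by linarith)
  have hε1 : ε ≤ b := by
    have := Real.log_le_sub_one_of_pos (show (0:ℝ) < 1 + b by linarith)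
    linarith
  have hε2 : b - b^2 ≤ ε := by
    have h1 : Real.log ((1+b)⁻¹) ≤ (1+b)⁻¹ - 1 :=
      Real.log_le_sub_one_of_pos (by positivity)
    rw [Real.log_inv] at h1
    have h2 : (1 - (1+b)⁻¹) ≤ ε := by linarith
    have h3 : (1+b)⁻¹ * (1+b) = 1 := inv_mul_cancel₀ (by positivity)
    nlinarith [h2, h3, hbpos]
  have hba2 : b * a^2 = a := by
    have h : b * a^2 = (a*b)*a := by ring
    rw [h, hab, one_mul]
  have hb2a2 : b^2 * a^2 = 1 := by
    have h : b^2 * a^2 = (a*b)^2 := by ring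
    rw [h, hab, one_pow]
  have hba : b * a = 1 := by rw [mul_comm]; exact hab
  have key1 : ε * a^2 ≤ a := by
    nlinarith [mul_nonneg (sub_nonneg.mpr hε1) (sq_nonneg a)]
  have key2 : a - 1 ≤ ε * a^2 := by
    nlinarith [mul_nonneg (sub_nonneg.mpr hε2) (sq_nonneg a)]
  have key3 : ε * a ≤ 1 := by
    nlinarith [mul_nonneg (sub_nonneg.mpr hε1) (le_of_lt (lt_of_lt_of_le one_pos ha1))]
  have hexp : r + 1 ≤ Real.exp r := Real.add_one_le_exp r
  have hr0 : (0:ℝ) ≤ r := by linarith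
  have hb21 : b^2 ≤ 1 := by nlinarith
  have m2 : r*b ≤ r := mul_le_of_le_one_right hr0 hb1
  have m4 : r*b^2 ≤ r := mul_le_of_le_one_right hr0 hb21
  have m8 : ε*b ≤ 1 := le_trans (mul_le_of_le_one_right hε0 hb1) (by linarith)
  have m10 : ε*b^2 ≤ 1 := le_trans (mul_le_of_le_one_right hε0 hb21) (by linarith)
  have m1 : 0 ≤ r*b := mul_nonneg hr0 hbpos.le
  have m3 : 0 ≤ r*b^2 := mul_nonneg hr0 (sq_nonneg b)
  have m5 : 0 ≤ ε*a := mul_nonneg hε0 (by linarith)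
  have m7 : 0 ≤ ε*b := mul_nonneg hε0 hbpos.le
  have m9 : 0 ≤ ε*b^2 := mul_nonneg hε0 (sq_nonneg b)
  have hEq : (r * (3 - 8 * Real.cosh (2 * r) - Real.cosh (4 * r)))
        + (Real.sinh (2 * r) * (8 * Real.log (2 * Real.cosh r) - 1)
            + Real.sinh (4 * r) * Real.log (2 * Real.cosh r))
      = 3*r - 8*(r*b) - (r*b^2) + 4*(ε*a) - 4*(ε*b) + (ε*a^2)/2 - (ε*b^2)/2
        - a/2 + b/2 := by
    rw [hc2, hc4, hs2, hs4, hL]; ring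
  rw [hEq, abs_le]
  constructor
  · linarith [key2, key3, hexp]
  · linarith [key1, key3, hexp]
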